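/- The family of finite Gaussian mixture distributions on the real line, 𝔉_G = { Σ_{k=1}^K π_k N(μ_k, σ_k²) : K ∈ ℕ₊, π_k ≥ 0, Σ_k π_k = 1, μ_k ∈ ℝ, σ_k > 0 }, is dense in (P₂(ℝ), W₂); that is, for every g ∈ P₂(ℝ) and every ε > 0 there exist K ∈ ℕ₊, weights π_1,…,π_K ≥ 0 summing to one, means μ_1,…,μ_K ∈ ℝ, and standard deviations σ_1,…,σ_K > 0 such that W₂(Σ_{k=1}^K π_k N(μ_k, σ_k²), g) < ε. -/

import Mathlib

open MeasureTheory ProbabilityTheory ENNReal Filter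

/-- Squared 2-Wasserstein distance between two measures on `ℝ`, defined as the infimum of
`∫ (x - y)^2 dγ` over all coupling probability measures `γ` with the given marginals. -/
noncomputable def W2sq (μ ν : MeasureTheory.Measure ℝ) : ℝ≥0∞ :=
  ⨅ (γ : MeasureTheory.Measure (ℝ × ℝ)) (_ : MeasureTheory.IsProbabilityMeasure γ)
    (_ : γ.map Prod.fst = μ) (_ : γ.map Prod.snd = ν),
    ∫⁻ p, ENNReal.ofReal ((p.1 - p.2) ^ 2) ∂γ

/-- The 2-Wasserstein distance `W₂`. -/
noncomputable def W2 (μ ν : MeasureTheory.Measure ℝ) : ℝ :=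
  Real.sqrt (W2sq μ ν).toReal

/-- `μ ∈ P₂(ℝ)`: a Borel probability measure on `ℝ` with finite second moment. -/
def MemP2 (μ : MeasureTheory.Measure ℝ) : Prop :=
  MeasureTheory.IsProbabilityMeasure μ ∧ (∫⁻ x, ENNReal.ofReal (x ^ 2) ∂μ) < ⊤

/-- Finiteness of the second moment of the standard Gaussian. -/
lemma lintegral_sq_gaussianReal_ne_top :
    (∫⁻ x, ENNReal.ofReal (x ^ 2) ∂(gaussianReal 0 1)) ≠ ⊤ := by
  have hint : Integrable (fun x : ℝ => gaussianPDFReal 0 1 x * x ^ 2) := by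
    have h1 : Integrable (fun x : ℝ => x ^ (2 : ℕ) * Real.exp (-(1/2) * x ^ 2)) := by
      have := integrable_rpow_mul_exp_neg_mul_sq (by norm_num : (0:ℝ) < 1/2)
        (s := ((2 : ℕ) : ℝ)) (by norm_num)
      simpa [Real.rpow_natCast] using this
    have h2 : (fun x : ℝ => gaussianPDFReal 0 1 x * x ^ 2)
        = fun x : ℝ => (Real.sqrt (2 * Real.pi))⁻¹ *
            (x ^ (2:ℕ) * Real.exp (-(1/2) * x ^ 2)) := by
      funext x
      rw [gaussianPDFReal]
      push_cast
      rw [show -(x - 0) ^ 2 / (2 * 1) = -(1/2) * x ^ 2 by ring]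
      rw [show (2 : ℝ) * Real.pi * 1 = 2 * Real.pi by ring]
      ring
    rw [h2]
    exact h1.const_mul _
  have hfin := hint.lintegral_lt_top
  have hmeas : Measurable fun x : ℝ => ENNReal.ofReal (x ^ 2) :=
    measurable_ofReal.comp (measurable_id.pow_const 2)
  rw [gaussianReal_of_var_ne_zero 0 one_ne_zero,
    lintegral_withDensity_eq_lintegral_mul _ (measurable_gaussianPDF 0 1) hmeas]
  refine ne_top_of_lt (lt_of_le_of_lt (le_of_eq ?_) hfin)
  refine lintegral_congr fun x => ?_
  simp only [Pi.mul_apply, gaussianPDF_def]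
  rw [← ENNReal.ofReal_mul (gaussianPDFReal_nonneg 0 1 x)]

/-- The family of finite Gaussian mixtures is dense in (P₂(ℝ), W₂). -/
theorem gaussianMixtures_dense_in_P2_W2
    (g : Measure ℝ) (hg : MemP2 g) (ε : ℝ) (hε : 0 < ε) :
    ∃ K : ℕ, 0 < K ∧
      ∃ (w : Fin K → ℝ) (m : Fin K → ℝ) (s : Fin K → ℝ),
        (∀ k, 0 ≤ w k) ∧ (∑ k, w k = 1) ∧ (∀ k, 0 < s k) ∧
        W2 (∑ k, ENNReal.ofReal (w k) • gaussianReal (m k) ⟨s k ^ 2, sq_nonneg _⟩) g < ε := by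
  obtain ⟨hgprob, hgmom⟩ := hg
  haveI : IsProbabilityMeasure g := hgprob
  set J : ℝ≥0∞ := ∫⁻ x, ENNReal.ofReal (x ^ 2) ∂(gaussianReal 0 1) with hJdef
  have hJ : J ≠ ⊤ := lintegral_sq_gaussianReal_ne_top
  set C : ℝ := J.toReal with hCdef
  have hC0 : 0 ≤ C := ENNReal.toReal_nonneg
  have hsq : Real.sqrt (C + 1) ^ 2 = C + 1 := Real.sq_sqrt (by linarith)
  have hsqrtpos : 0 < Real.sqrt (C + 1) := Real.sqrt_pos.2 (by linarith)
  set σ : ℝ := ε / (4 * Real.sqrt (C + 1)) with hσdef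
  have hσpos : 0 < σ := by positivity
  set v : NNReal := ⟨σ ^ 2, sq_nonneg _⟩ with hvdef
  set N : Measure ℝ := gaussianReal 0 v with hNdef
  haveI : IsProbabilityMeasure N := by rw [hNdef]; infer_instance
  -- second moment of N
  have hsqmeas : Measurable fun x : ℝ => ENNReal.ofReal (x ^ 2) :=
    measurable_ofReal.comp (measurable_id.pow_const 2)
  have hNmom : ∫⁻ z, ENNReal.ofReal (z ^ 2) ∂N = ENNReal.ofReal (σ ^ 2) * J := by
    have hmap : (gaussianReal 0 1).map (σ * ·) = N := by
      rw [gaussianReal_map_const_mul σ, mul_zero, hNdef]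
      congr 1
      ext
      simp [hvdef]
      rfl
    rw [← hmap, lintegral_map hsqmeas (measurable_const_mul σ)]
    simp_rw [mul_pow, ENNReal.ofReal_mul (sq_nonneg σ)]
    rw [lintegral_const_mul _ hsqmeas]
  -- L² approximation by a simple function
  have hid : MemLp (fun x : ℝ => x) 2 g := by
    have : MemLp (id : ℝ → ℝ) 2 g := by
      rw [memLp_two_iff_integrable_sq aestronglyMeasurable_id]
      refine ⟨(measurable_id.pow_const 2).aestronglyMeasurable, ?_⟩
      simp only [id_eq]
      rw [hasFiniteIntegral_iff_ofReal (ae_of_all _ fun x => sq_nonneg x)]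
      exact hgmom
    exact this
  have hη : ENNReal.ofReal (ε / 2) ≠ 0 := by
    rw [Ne, ENNReal.ofReal_eq_zero, not_le]; positivity
  obtain ⟨f, hf, -⟩ := hid.exists_simpleFunc_eLpNorm_sub_lt (by norm_num) hη
  set E : ℝ≥0∞ := ∫⁻ x, ENNReal.ofReal ((x - f x) ^ 2) ∂g with hEdef
  have hE : E < ENNReal.ofReal (ε / 2) ^ 2 := by
    have h2 : eLpNorm ((fun x : ℝ => x) - ⇑f) 2 g = E ^ (1/2 : ℝ) := by
      rw [eLpNorm_eq_lintegral_rpow_enorm_toReal (by norm_num) (by norm_num),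
        show (1 / (2:ℝ≥0∞).toReal) = (1/2 : ℝ) by norm_num]
      congr 1
      refine lintegral_congr fun x => ?_
      rw [show ((fun x : ℝ => x) - ⇑f) x = x - f x from rfl,
        show ((2:ℝ≥0∞)).toReal = ((2:ℕ):ℝ) by norm_num, ENNReal.rpow_natCast,
        Real.enorm_eq_ofReal_abs, ← ENNReal.ofReal_pow (abs_nonneg _), sq_abs]
    have h3 : (E ^ (1/2:ℝ)) ^ (2:ℝ) < (ENNReal.ofReal (ε/2)) ^ (2:ℝ) :=
      ENNReal.rpow_lt_rpow (h2 ▸ hf) (by norm_num)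
    rwa [← ENNReal.rpow_mul, show (1/2:ℝ) * 2 = 1 by norm_num, ENNReal.rpow_one,
      show (2:ℝ) = ((2:ℕ):ℝ) by norm_num, ENNReal.rpow_natCast] at h3
  -- the mixture
  set T : Finset ℝ := f.range with hTdef
  set K : ℕ := T.card with hKdef
  have hKpos : 0 < K := by
    rw [hKdef, Finset.card_pos]
    exact ⟨f 0, f.mem_range_self 0⟩
  set e : Fin K ≃ {x // x ∈ T} := T.equivFin.symm with hedef
  set w : Fin K → ℝ := fun k => (g (f ⁻¹' {(e k : ℝ)})).toReal with hwdef
  set m : Fin K → ℝ := fun k => (e k : ℝ) with hmdef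
  have hofReal : ∀ k, ENNReal.ofReal (w k) = g (f ⁻¹' {m k}) :=
    fun k => ENNReal.ofReal_toReal (measure_ne_top g _)
  have hsum : ∑ k, w k = 1 := by
    have h1 : ∑ k : Fin K, g (f ⁻¹' {(e k : ℝ)}) = 1 := by
      rw [Equiv.sum_comp e (fun c : {x // x ∈ T} => g (f ⁻¹' {(c : ℝ)})),
        Finset.sum_coe_sort T (fun c => g (f ⁻¹' {c})), hTdef,
        SimpleFunc.sum_range_measure_preimage_singleton f g, measure_univ]
    rw [hwdef, ← ENNReal.toReal_sum (fun k _ => measure_ne_top g _), h1, ENNReal.toReal_one]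
  set μmix : Measure ℝ := ∑ k, ENNReal.ofReal (w k) • gaussianReal (m k) v with hmixdef
  -- the coupling
  set φ : ℝ × ℝ → ℝ × ℝ := fun p => (f p.1 + p.2, p.1) with hφdef
  have hmf : Measurable f := f.measurable
  have hφ1 : Measurable fun p : ℝ × ℝ => f p.1 + p.2 :=
    (hmf.comp measurable_fst).add measurable_snd
  have hφm : Measurable φ := hφ1.prodMk measurable_fst
  set γ : Measure (ℝ × ℝ) := (g.prod N).map φ with hγdef
  have hγprob : IsProbabilityMeasure γ := Measure.isProbabilityMeasure_map hφm.aemeasurable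
  have hsnd : γ.map Prod.snd = g := by
    rw [hγdef, Measure.map_map measurable_snd hφm,
      show (Prod.snd ∘ φ) = (Prod.fst : ℝ × ℝ → ℝ) from rfl]
    exact Measure.fst_prod
  have hkey : (g.prod N).map (fun p : ℝ × ℝ => f p.1 + p.2) = μmix := by
    ext S hS
    rw [Measure.map_apply hφ1 hS, Measure.prod_apply (hφ1 hS)]
    have hslice : ∀ x : ℝ, N (Prod.mk x ⁻¹' ((fun p : ℝ × ℝ => f p.1 + p.2) ⁻¹' S))
        = gaussianReal (f x) v S := by
      intro x
      rw [show (Prod.mk x ⁻¹' ((fun p : ℝ × ℝ => f p.1 + p.2) ⁻¹' S)) = (f x + ·) ⁻¹' S from rfl,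
        ← Measure.map_apply (measurable_const_add (f x)) hS, hNdef,
        gaussianReal_map_const_add (f x), zero_add]
    simp_rw [hslice]
    have hlhs : ∫⁻ x, gaussianReal (f x) v S ∂g
        = ∑ c ∈ T, gaussianReal c v S * g (f ⁻¹' {c}) := by
      have h0 : ∫⁻ x, gaussianReal (f x) v S ∂g
          = ∫⁻ x, (f.map (fun c => gaussianReal c v S)) x ∂g := by
        refine lintegral_congr fun x => ?_
        rw [SimpleFunc.map_apply]
      rw [h0, SimpleFunc.lintegral_eq_lintegral, SimpleFunc.map_lintegral]
    rw [hlhs]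
    calc ∑ c ∈ T, gaussianReal c v S * g (f ⁻¹' {c})
        = ∑ c ∈ T, g (f ⁻¹' {c}) * gaussianReal c v S :=
          Finset.sum_congr rfl fun c _ => mul_comm _ _
      _ = ∑ k : Fin K, g (f ⁻¹' {m k}) * gaussianReal (m k) v S := by
          rw [← Finset.sum_coe_sort T (fun c => g (f ⁻¹' {c}) * gaussianReal c v S),
            ← Equiv.sum_comp e
              (fun c : {x // x ∈ T} => g (f ⁻¹' {(c:ℝ)}) * gaussianReal (c:ℝ) v S)]
      _ = μmix S := by
          rw [hmixdef, Measure.finset_sum_apply]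
          refine Finset.sum_congr rfl fun k _ => ?_
          rw [Measure.smul_apply, smul_eq_mul, hofReal]
  have hfst : γ.map Prod.fst = μmix := by
    rw [hγdef, Measure.map_map measurable_fst hφm,
      show (Prod.fst ∘ φ) = fun p : ℝ × ℝ => f p.1 + p.2 from rfl]
    exact hkey
  -- cost of the coupling
  have hcost : (∫⁻ p, ENNReal.ofReal ((p.1 - p.2) ^ 2) ∂γ)
      ≤ 2 * E + 2 * (ENNReal.ofReal (σ ^ 2) * J) := by
    have hmeas : Measurable fun p : ℝ × ℝ => ENNReal.ofReal ((p.1 - p.2) ^ 2) :=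
      measurable_ofReal.comp ((measurable_fst.sub measurable_snd).pow_const 2)
    rw [hγdef, lintegral_map hmeas hφm]
    have hb : ∀ q : ℝ × ℝ, ENNReal.ofReal (((φ q).1 - (φ q).2) ^ 2)
        ≤ ENNReal.ofReal (2 * (q.1 - f q.1) ^ 2) + ENNReal.ofReal (2 * q.2 ^ 2) := by
      intro q
      rw [← ENNReal.ofReal_add (by positivity) (by positivity)]
      refine ENNReal.ofReal_le_ofReal ?_
      have : (φ q).1 - (φ q).2 = (f q.1 - q.1) + q.2 := by
        simp [hφdef]; ring
      rw [this]
      nlinarith [sq_nonneg (f q.1 - q.1 - q.2)]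
    refine le_trans (lintegral_mono hb) ?_
    have hF1 : Measurable fun x : ℝ => ENNReal.ofReal (2 * (x - f x) ^ 2) :=
      measurable_ofReal.comp ((measurable_const.mul ((measurable_id.sub hmf).pow_const 2)))
    have hF2 : Measurable fun z : ℝ => ENNReal.ofReal (2 * z ^ 2) :=
      measurable_ofReal.comp (measurable_const.mul (measurable_id.pow_const 2))
    have hG1 : Measurable fun q : ℝ × ℝ => ENNReal.ofReal (2 * (q.1 - f q.1) ^ 2) :=
      measurable_ofReal.comp
        ((measurable_const.mul ((measurable_fst.sub (hmf.comp measurable_fst)).pow_const 2)))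
    rw [lintegral_add_left hG1]
    have hfsteq : ∫⁻ q : ℝ × ℝ, ENNReal.ofReal (2 * (q.1 - f q.1) ^ 2) ∂(g.prod N)
        = ∫⁻ x, ENNReal.ofReal (2 * (x - f x) ^ 2) ∂g := by
      rw [show (∫⁻ q : ℝ × ℝ, ENNReal.ofReal (2 * (q.1 - f q.1) ^ 2) ∂(g.prod N))
          = ∫⁻ y, ENNReal.ofReal (2 * (y - f y) ^ 2) ∂((g.prod N).map Prod.fst) from
        (lintegral_map hF1 measurable_fst).symm]
      congr 1
      exact Measure.fst_prod
    have hsndeq : ∫⁻ q : ℝ × ℝ, ENNReal.ofReal (2 * q.2 ^ 2) ∂(g.prod N)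
        = ∫⁻ z, ENNReal.ofReal (2 * z ^ 2) ∂N := by
      rw [show (∫⁻ q : ℝ × ℝ, ENNReal.ofReal (2 * q.2 ^ 2) ∂(g.prod N))
          = ∫⁻ z, ENNReal.ofReal (2 * z ^ 2) ∂((g.prod N).map Prod.snd) from
        (lintegral_map hF2 measurable_snd).symm]
      congr 1
      exact Measure.snd_prod
    rw [hfsteq, hsndeq]
    have e1 : ∫⁻ x, ENNReal.ofReal (2 * (x - f x) ^ 2) ∂g = 2 * E := by
      simp_rw [ENNReal.ofReal_mul (by norm_num : (0:ℝ) ≤ 2)]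
      have hh : Measurable fun x : ℝ => ENNReal.ofReal ((x - f x) ^ 2) :=
        measurable_ofReal.comp ((measurable_id.sub hmf).pow_const 2)
      rw [lintegral_const_mul _ hh, show ENNReal.ofReal 2 = 2 by norm_num, ← hEdef]
    have e2 : ∫⁻ z, ENNReal.ofReal (2 * z ^ 2) ∂N = 2 * (ENNReal.ofReal (σ ^ 2) * J) := by
      simp_rw [ENNReal.ofReal_mul (by norm_num : (0:ℝ) ≤ 2)]
      rw [lintegral_const_mul _ hsqmeas, hNmom, show ENNReal.ofReal 2 = 2 by norm_num]
    rw [e1, e2]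
  -- assemble
  have hW2sq_le : W2sq μmix g ≤ 2 * E + 2 * (ENNReal.ofReal (σ ^ 2) * J) := by
    refine le_trans ?_ hcost
    unfold W2sq
    exact iInf_le_of_le γ (iInf_le_of_le hγprob (iInf_le_of_le hfst (iInf_le_of_le hsnd le_rfl)))
  have hfin : 2 * (ENNReal.ofReal (σ ^ 2) * J) ≠ ⊤ :=
    ENNReal.mul_ne_top (by norm_num) (ENNReal.mul_ne_top ENNReal.ofReal_ne_top hJ)
  have hlt : W2sq μmix g
      < 2 * ENNReal.ofReal (ε/2) ^ 2 + 2 * (ENNReal.ofReal (σ ^ 2) * J) := by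
    refine lt_of_le_of_lt hW2sq_le ?_
    refine ENNReal.add_lt_add_right hfin ?_
    rw [mul_comm 2 E, mul_comm 2 (ENNReal.ofReal (ε/2) ^ 2)]
    exact ENNReal.mul_lt_mul_left (by norm_num) (by norm_num) hE
  have hbound : 2 * ENNReal.ofReal (ε/2) ^ 2 + 2 * (ENNReal.ofReal (σ ^ 2) * J)
      ≤ ENNReal.ofReal (ε ^ 2) := by
    have hJC : J = ENNReal.ofReal C := by rw [hCdef, ENNReal.ofReal_toReal hJ]
    rw [hJC, ← ENNReal.ofReal_pow (by positivity), ← ENNReal.ofReal_mul (sq_nonneg σ),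
      show (2:ℝ≥0∞) = ENNReal.ofReal 2 by norm_num,
      ← ENNReal.ofReal_mul (by norm_num), ← ENNReal.ofReal_mul (by norm_num),
      ← ENNReal.ofReal_add (by positivity) (by positivity)]
    refine ENNReal.ofReal_le_ofReal ?_
    have h16 : (4 * Real.sqrt (C+1)) ^ 2 = 16 * (C + 1) := by nlinarith [hsq]
    have hσ2 : σ ^ 2 * (C + 1) = ε ^ 2 / 16 := by
      rw [hσdef, div_pow, h16]
      field_simp
    nlinarith [hC0, sq_nonneg ε, sq_nonneg σ, hσ2]
  have hlt2 : W2sq μmix g < ENNReal.ofReal (ε ^ 2) := lt_of_lt_of_le hlt hbound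
  have htoReal : (W2sq μmix g).toReal < ε ^ 2 := by
    have h := (ENNReal.toReal_lt_toReal hlt2.ne_top ENNReal.ofReal_ne_top).2 hlt2
    rwa [ENNReal.toReal_ofReal (by positivity)] at h
  refine ⟨K, hKpos, w, m, fun _ => σ, fun k => ENNReal.toReal_nonneg, hsum,
    fun _ => hσpos, ?_⟩
  show W2 μmix g < ε
  unfold W2
  calc Real.sqrt (W2sq μmix g).toReal
      < Real.sqrt (ε ^ 2) := Real.sqrt_lt_sqrt ENNReal.toReal_nonneg htoReal
    _ = ε := Real.sqrt_sq hε.le
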